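/- Let K be a local field of characteristic (0,p) with valuation ring 𝒪_K, uniformizer ϖ, and a real-valued absolute value |·| with 0 < |ϖ| < 1 and |K^×| = |ϖ|^ℤ. Fix d ≥ 1 and for 0 < ρ < 1 let A_ρ denote the ring of formal power series Σ_i b_i T^i ∈ K⟦T_1,…,T_d⟧ (i ranging over multi-indices, |i| the total degree) such that |b_i| ρ^{|i|} ≤ 1 for all i. Let j ≥ 0 be an integer, let 0 < r < 1, and set M = ⌈(1+j)/log_{|ϖ|}(r)⌉. Then for every s with r^{1/(j+1)} ≤ s < 1 and every integer j' ≥ j, the image of the natural map A_s/ϖ^{j'}A_s → A_r/ϖ^{j}A_r is exactly the 𝒪_K/ϖ^{j}𝒪_K-submodule generated by the classes of the monomials T^i with |i| < M. -/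

import Mathlib

/-- Data exhibiting `L` as a local field of characteristic `(0, p)`: a multiplicative
nonarchimedean absolute value `a` (representing the absolute valuation `v` via
`a x = c ^ v x` for a base `0 < c < 1`), a uniformizer `ϖ` generating the (discrete)
value group, residue characteristic `p` (`a p < 1`), completeness, and perfectness of
the residue field (surjectivity of the `p`-power map on residues). -/
structure LocalFieldData (p : ℕ) (L : Type*) [Field L] where
  a : L → ℝ
  a_zero : a 0 = 0
  a_pos : ∀ x : L, x ≠ 0 → 0 < a x
  a_mul : ∀ x y : L, a (x * y) = a x * a y
  a_add : ∀ x y : L, a (x + y) ≤ max (a x) (a y)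
  ϖ : L
  ϖ_pos : 0 < a ϖ
  ϖ_lt_one : a ϖ < 1
  disc : ∀ x : L, x ≠ 0 → ∃ k : ℤ, a x = a ϖ ^ k
  res_char : a (p : L) < 1
  complete : ∀ u : ℕ → L,
    (∀ ε : ℝ, 0 < ε → ∃ N : ℕ, ∀ m ≥ N, ∀ n ≥ N, a (u m - u n) < ε) →
    ∃ l : L, ∀ ε : ℝ, 0 < ε → ∃ N : ℕ, ∀ n ≥ N, a (u n - l) < ε
  perfect_res : ∀ x : L, a x ≤ 1 → ∃ y : L, a y ≤ 1 ∧ a (x - y ^ p) < 1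


/-- Let `K` be a local field of characteristic `(0,p)` with uniformizer
`ϖ` and absolute value `|·|` with `|K^×| = |ϖ|^ℤ`.  For `0 < ρ < 1` let `A_ρ` be the
ring of power series `∑ b_i T^i ∈ K⟦T₁,…,T_d⟧` with `|b_i| ρ^{|i|} ≤ 1` for all
multi-indices `i`.  Let `j ≥ 0`, `0 < r < 1`, `M = ⌈(1+j)/log_{|ϖ|}(r)⌉`.  Then for
every `s` with `r^{1/(j+1)} ≤ s < 1` and every `j' ≥ j`, the image of the natural map
`A_s/ϖ^{j'} A_s → A_r/ϖ^j A_r` is exactly the `𝒪_K/ϖ^j 𝒪_K`-submodule generated by the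
classes of the monomials `T^i` with `|i| < M`.  (The equality of images is expressed as
an equality of unions of cosets inside `A_r`, i.e. `A_s + ϖ^j A_r` equals the set of
integral power series supported in degrees `< M` plus `ϖ^j A_r`.) -/
theorem image_of_restriction_map_on_power_bounded_series
    (p : ℕ) (hp : p.Prime)
    (K : Type*) [Field K] [CharZero K] (D : LocalFieldData p K)
    (d : ℕ) (hd : 1 ≤ d)
    (j : ℕ) (r : ℝ) (hr0 : 0 < r) (hr1 : r < 1)
    (M : ℤ) (hM : M = ⌈((1 : ℝ) + (j : ℝ)) / Real.logb (D.a D.ϖ) r⌉)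
    (s : ℝ) (hs : r ^ ((1 : ℝ) / ((j : ℝ) + 1)) ≤ s) (hs1 : s < 1)
    (j' : ℕ) (hj' : j ≤ j') :
    {x : MvPowerSeries (Fin d) K |
        ∃ b : MvPowerSeries (Fin d) K,
          (∀ i : Fin d →₀ ℕ,
            D.a (MvPowerSeries.coeff i b) * s ^ (i.sum fun _ e => e) ≤ 1) ∧
          ∃ c : MvPowerSeries (Fin d) K,
            (∀ i : Fin d →₀ ℕ,
              D.a (MvPowerSeries.coeff i c) * r ^ (i.sum fun _ e => e) ≤ 1) ∧
            x = b + D.ϖ ^ j • c} =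
      {x : MvPowerSeries (Fin d) K |
        ∃ c : MvPowerSeries (Fin d) K,
          (∀ i : Fin d →₀ ℕ,
            D.a (MvPowerSeries.coeff i c) ≤ 1 ∧
              (M ≤ ((i.sum fun _ e => e : ℕ) : ℤ) → MvPowerSeries.coeff i c = 0)) ∧
          ∃ a' : MvPowerSeries (Fin d) K,
            (∀ i : Fin d →₀ ℕ,
              D.a (MvPowerSeries.coeff i a') * r ^ (i.sum fun _ e => e) ≤ 1) ∧
            x = c + D.ϖ ^ j • a'} := by
  classical
  have a0 : D.a 0 = 0 := D.a_zero
  have hq0 : 0 < D.a D.ϖ := D.ϖ_pos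
  have hq1 : D.a D.ϖ < 1 := D.ϖ_lt_one
  set q : ℝ := D.a D.ϖ with hqdef
  have hϖ : D.ϖ ≠ 0 := by
    intro h
    rw [hqdef, h, a0] at hq0
    exact lt_irrefl 0 hq0
  have hOne : D.a 1 = 1 := by
    have h := D.a_mul 1 1
    rw [one_mul] at h
    have h1 : 0 < D.a 1 := D.a_pos 1 one_ne_zero
    nlinarith
  have apow : ∀ (x : K) (n : ℕ), D.a (x ^ n) = D.a x ^ n := by
    intro x n
    induction n with
    | zero => simpa using hOne
    | succ k ih => rw [pow_succ, pow_succ, D.a_mul, ih]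
  have anonneg : ∀ x : K, 0 ≤ D.a x := by
    intro x
    rcases eq_or_ne x 0 with h | h
    · rw [h, a0]
    · exact (D.a_pos x h).le
  have hj1 : (0:ℝ) < (j:ℝ) + 1 := by positivity
  have hlogr : Real.log r < 0 := Real.log_neg hr0 hr1
  have hlogq : Real.log q < 0 := Real.log_neg hq0 hq1
  set L : ℝ := Real.logb q r with hLdef
  have hL : 0 < L := by
    rw [hLdef, Real.logb]
    exact div_pos_of_neg_of_neg hlogr hlogq
  have hLrq : Real.logb r q = 1 / L := by
    rw [hLdef, Real.logb, Real.logb, one_div_div]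
  -- ceiling bounds
  have hMub : ((1:ℝ) + (j:ℝ)) / L ≤ (M:ℝ) := by rw [hM]; exact Int.le_ceil _
  have hMlb : (M:ℝ) < ((1:ℝ) + (j:ℝ)) / L + 1 := by rw [hM]; exact Int.ceil_lt_add_one _
  have hMge : Real.logb r q ≤ (M:ℝ) / ((j:ℝ) + 1) := by
    rw [hLrq, div_le_div_iff₀ hL hj1]
    have h' : (1:ℝ) + (j:ℝ) ≤ (M:ℝ) * L := (div_le_iff₀ hL).mp hMub
    linarith
  have hMlt : ((M:ℝ) - 1) / ((j:ℝ) + 1) < Real.logb r q := by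
    rw [hLrq, div_lt_div_iff₀ hj1 hL]
    have h' : ((M:ℝ) - 1) * L < (1:ℝ) + (j:ℝ) := by
      have := (lt_div_iff₀ hL).mp (by linarith : (M:ℝ) - 1 < ((1:ℝ) + (j:ℝ)) / L)
      linarith
    linarith
  have hs0 : 0 < s := lt_of_lt_of_le (Real.rpow_pos_of_pos hr0 _) hs
  -- s^n ≥ r^(n/(j+1))  (rpow)
  have hsn : ∀ n : ℕ, r ^ ((n:ℝ) / ((j:ℝ) + 1)) ≤ s ^ n := by
    intro n
    have h1 : (r ^ ((1:ℝ) / ((j:ℝ) + 1))) ^ n ≤ s ^ n :=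
      pow_le_pow_left₀ (Real.rpow_nonneg hr0.le _) hs n
    calc r ^ ((n:ℝ) / ((j:ℝ) + 1))
        = (r ^ ((1:ℝ) / ((j:ℝ) + 1))) ^ n := by
          rw [← Real.rpow_natCast (r ^ ((1:ℝ) / ((j:ℝ) + 1))) n, ← Real.rpow_mul hr0.le]
          congr 1; ring
      _ ≤ s ^ n := h1
  have hqeq : r ^ Real.logb r q = q := Real.rpow_logb hr0 (ne_of_lt hr1) hq0
  -- small degree coefficients are integral
  have small : ∀ (x : K) (n : ℕ), D.a x * s ^ n ≤ 1 → (n:ℤ) < M → D.a x ≤ 1 := by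
    intro x n hb hn
    by_contra hx1
    push_neg at hx1
    have hx0 : x ≠ 0 := by
      intro h; rw [h, a0] at hx1; linarith
    obtain ⟨k, hk⟩ := D.disc x hx0
    have hkneg : k < 0 := by
      by_contra hk0
      push_neg at hk0
      have : q ^ k = q ^ k.toNat := by
        rw [← zpow_natCast, Int.toNat_of_nonneg hk0]
      have h2 : D.a x ≤ 1 := by
        rw [hk, this]; exact pow_le_one₀ hq0.le hq1.le
      linarith
    have hax1 : 1 ≤ D.a x * q := by
      have hkk : k + 1 ≤ 0 := by omega
      set m : ℕ := (-(k + 1)).toNat with hm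
      have hmk : k + 1 = -(m:ℤ) := by omega
      have e1 : D.a x * q = q ^ (k + 1) := by
        rw [hk]
        exact (zpow_add_one₀ (ne_of_gt hq0) k).symm
      rw [e1, hmk, zpow_neg, zpow_natCast]
      have hm1 : q ^ m ≤ 1 := pow_le_one₀ hq0.le hq1.le
      have hm0 : 0 < q ^ m := pow_pos hq0 m
      exact (one_le_inv₀ hm0).mpr hm1
    -- q < s^n
    have hnM : (n:ℝ) ≤ (M:ℝ) - 1 := by
      have h' : (n:ℤ) ≤ M - 1 := by omega
      have h'' : ((n:ℤ):ℝ) ≤ ((M - 1 : ℤ):ℝ) := Int.cast_le.mpr h'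
      push_cast at h''
      linarith
    have hqs : q < s ^ n := by
      calc q = r ^ Real.logb r q := hqeq.symm
        _ < r ^ (((M:ℝ) - 1) / ((j:ℝ) + 1)) :=
            Real.rpow_lt_rpow_of_exponent_gt hr0 hr1 hMlt
        _ ≤ r ^ ((n:ℝ) / ((j:ℝ) + 1)) := by
            apply Real.rpow_le_rpow_of_exponent_ge hr0 hr1.le
            gcongr
        _ ≤ s ^ n := hsn n
    have hxpos : 0 < D.a x := D.a_pos x hx0
    have : D.a x * q < D.a x * s ^ n := by
      exact mul_lt_mul_of_pos_left hqs hxpos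
    linarith
  -- large degree coefficients divisible by ϖ^j
  have big : ∀ (x : K) (n : ℕ), D.a x * s ^ n ≤ 1 → M ≤ (n:ℤ) →
      D.a (x / D.ϖ ^ j) * r ^ n ≤ 1 := by
    intro x n hb hn
    have hqj : (0:ℝ) < q ^ j := pow_pos hq0 j
    have hdiv : D.a (x / D.ϖ ^ j) = D.a x / q ^ j := by
      have h := D.a_mul (x / D.ϖ ^ j) (D.ϖ ^ j)
      rw [div_mul_cancel₀ x (pow_ne_zero j hϖ), apow] at h
      rw [eq_div_iff (ne_of_gt hqj)]
      exact h.symm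
    rw [hdiv, div_mul_eq_mul_div, div_le_one hqj]
    -- D.a x * r^n ≤ q^j
    have hsnpos : (0:ℝ) < r ^ ((n:ℝ) / ((j:ℝ) + 1)) := Real.rpow_pos_of_pos hr0 _
    have hax : D.a x ≤ (r ^ ((n:ℝ) / ((j:ℝ) + 1)))⁻¹ := by
      have h1 : D.a x ≤ (s ^ n)⁻¹ := by
        rw [← one_div]
        exact (le_div_iff₀ (pow_pos hs0 n)).mpr hb
      refine h1.trans ?_
      gcongr
      exact hsn n
    have hrq : r ^ ((n:ℝ) / ((j:ℝ) + 1)) ≤ q := by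
      calc r ^ ((n:ℝ) / ((j:ℝ) + 1)) ≤ r ^ Real.logb r q := by
            apply Real.rpow_le_rpow_of_exponent_ge hr0 hr1.le
            refine hMge.trans ?_
            gcongr
            exact_mod_cast hn
        _ = q := hqeq
    set t : ℝ := r ^ ((n:ℝ) / ((j:ℝ) + 1)) with htdef
    have ht0 : 0 < t := hsnpos
    have htj : t ^ (j + 1) = r ^ n := by
      rw [htdef, ← Real.rpow_natCast (r ^ ((n:ℝ) / ((j:ℝ) + 1))) (j + 1),
        ← Real.rpow_mul hr0.le, ← Real.rpow_natCast r n]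
      congr 1
      have hj1' : ((j:ℝ) + 1) ≠ 0 := ne_of_gt hj1
      push_cast
      field_simp
    calc D.a x * r ^ n ≤ t⁻¹ * r ^ n := by
          gcongr
      _ = t ^ j := by
          rw [← htj, pow_succ]
          field_simp
      _ ≤ q ^ j := by
          gcongr
  -- the two halves of the set equality
  ext x
  simp only [Set.mem_setOf_eq]
  constructor
  · rintro ⟨b, hb, cold, hcold, rfl⟩
    set nc : MvPowerSeries (Fin d) K :=
      fun i => if ((i.sum fun _ e => e : ℕ) : ℤ) < M then MvPowerSeries.coeff i b else 0
      with hnc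
    set ae : MvPowerSeries (Fin d) K :=
      fun i => if M ≤ ((i.sum fun _ e => e : ℕ) : ℤ) then MvPowerSeries.coeff i b / D.ϖ ^ j
        else 0 with hae
    have hncc : ∀ i : Fin d →₀ ℕ, MvPowerSeries.coeff i nc
        = if ((i.sum fun _ e => e : ℕ) : ℤ) < M then MvPowerSeries.coeff i b else 0 :=
      fun i => rfl
    have haec : ∀ i : Fin d →₀ ℕ, MvPowerSeries.coeff i ae
        = if M ≤ ((i.sum fun _ e => e : ℕ) : ℤ) then MvPowerSeries.coeff i b / D.ϖ ^ j
          else 0 :=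
      fun i => rfl
    refine ⟨nc, ?_, ae + cold, ?_, ?_⟩
    · intro i
      rw [hncc i]
      by_cases h : ((i.sum fun _ e => e : ℕ) : ℤ) < M
      · rw [if_pos h]
        exact ⟨small _ _ (hb i) h, fun h' => absurd h' (not_le.mpr h)⟩
      · rw [if_neg h]
        exact ⟨by rw [a0]; exact zero_le_one, fun _ => rfl⟩
    · intro i
      have hadd : MvPowerSeries.coeff i (ae + cold)
          = MvPowerSeries.coeff i ae + MvPowerSeries.coeff i cold := map_add _ _ _
      rw [hadd]
      refine le_trans (mul_le_mul_of_nonneg_right (D.a_add _ _)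
        (pow_nonneg hr0.le _)) ?_
      rw [max_mul_of_nonneg _ _ (pow_nonneg hr0.le _)]
      apply max_le
      · rw [haec i]
        by_cases h : M ≤ ((i.sum fun _ e => e : ℕ) : ℤ)
        · rw [if_pos h]
          exact big _ _ (hb i) h
        · rw [if_neg h, a0, zero_mul]
          exact zero_le_one
      · exact hcold i
    · apply MvPowerSeries.ext
      intro i
      rw [map_add, map_add, MvPowerSeries.coeff_smul, MvPowerSeries.coeff_smul, map_add,
        hncc i, haec i]
      by_cases h : M ≤ ((i.sum fun _ e => e : ℕ) : ℤ)
      · rw [if_neg (not_lt.mpr h), if_pos h, mul_add,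
          mul_div_cancel₀ _ (pow_ne_zero j hϖ)]
        ring
      · rw [if_pos (not_le.mp h), if_neg h, mul_add, mul_zero]
        ring
  · rintro ⟨c, hc, a', ha', rfl⟩
    refine ⟨c, ?_, a', ha', rfl⟩
    intro i
    have h1 : D.a (MvPowerSeries.coeff i c) ≤ 1 := (hc i).1
    have h2 : s ^ (i.sum fun _ e => e) ≤ 1 := pow_le_one₀ hs0.le hs1.le
    have h3 : (0:ℝ) ≤ s ^ (i.sum fun _ e => e) := pow_nonneg hs0.le _
    nlinarith [anonneg (MvPowerSeries.coeff i c)]
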